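/- Let f : ℝⁿ → ℝ be locally Lipschitz around x̄ ∈ ℝⁿ. Then for every d ∈ ℝⁿ, the function g(x) := max{f(x), 0} satisfies g'(x̄; d) ≤ max{ f(x̄) + f'(x̄; d), 0 } − max{ f(x̄), 0 }, where f'(x; d) denotes the upper directional derivative. -/

import Mathlib

open Filter

/-- The upper directional derivative of `f` at `x` in direction `d`:
`f'(x; d) := limsup_{t → 0⁺} (f(x + t d) − f(x))/t`. -/
noncomputable def upperDirDeriv {n : ℕ} (f : EuclideanSpace ℝ (Fin n) → ℝ)
    (x d : EuclideanSpace ℝ (Fin n)) : ℝ :=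
  Filter.limsup (fun t : ℝ => (f (x + t • d) - f x) / t) (nhdsWithin 0 (Set.Ioi 0))

private lemma max_convex_aux (a s t : ℝ) (ht : 0 < t) (ht1 : t ≤ 1) :
    max (a + t * s) 0 - max a 0 ≤ t * (max (a + s) 0 - max a 0) := by
  rcases le_total (a + t * s) 0 with h1 | h1 <;>
  rcases le_total a 0 with h2 | h2 <;>
  rcases le_total (a + s) 0 with h3 | h3 <;>
  simp [max_eq_left, max_eq_right, h1, h2, h3] <;> nlinarith

/-- if `f` is locally Lipschitz around `xb`, then the function
`g(x) := max{f(x), 0}` satisfies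
`g'(xb; d) ≤ max{f(xb) + f'(xb; d), 0} − max{f(xb), 0}`. -/
theorem maxZero_upperDirDeriv_le {n : ℕ}
    (f : EuclideanSpace ℝ (Fin n) → ℝ) (xb : EuclideanSpace ℝ (Fin n))
    (hf : ∃ K : NNReal, ∃ U ∈ nhds xb, LipschitzOnWith K f U)
    (d : EuclideanSpace ℝ (Fin n)) :
    upperDirDeriv (fun x => max (f x) 0) xb d ≤
      max (f xb + upperDirDeriv f xb d) 0 - max (f xb) 0 := by
  obtain ⟨K, U, hU, hLip⟩ := hf
  set T := nhdsWithin (0:ℝ) (Set.Ioi 0) with hT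
  set a := f xb with ha
  set q : ℝ → ℝ := fun t => (f (xb + t • d) - a) / t with hq
  set L : ℝ := Filter.limsup q T with hL
  set C : ℝ := (K : ℝ) * ‖d‖ with hC
  -- eventual membership in U
  have htend : Filter.Tendsto (fun t : ℝ => xb + t • d) (nhds 0) (nhds xb) := by
    have : Continuous (fun t : ℝ => xb + t • d) := by continuity
    have h0 : (fun t : ℝ => xb + t • d) 0 = xb := by simp
    simpa [h0] using this.tendsto 0
  have hmemU : ∀ᶠ t in T, xb + t • d ∈ U :=
    nhdsWithin_le_nhds (htend.eventually_mem hU)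
  have hpos : ∀ᶠ t in T, t ∈ Set.Ioi (0:ℝ) := eventually_mem_nhdsWithin
  have hxbU : xb ∈ U := mem_of_mem_nhds hU
  -- bound on q
  have hqbound : ∀ᶠ t in T, |q t| ≤ C := by
    filter_upwards [hmemU, hpos] with t htU htpos
    have := hLip.dist_le_mul _ htU _ hxbU
    rw [dist_eq_norm, dist_eq_norm] at this
    simp only [add_sub_cancel_left, norm_smul, Real.norm_eq_abs,
      abs_of_pos (Set.mem_Ioi.mp htpos)] at this
    rw [hq]
    rw [abs_div, abs_of_pos (Set.mem_Ioi.mp htpos), div_le_iff₀ (Set.mem_Ioi.mp htpos)]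
    calc |f (xb + t • d) - a| = ‖f (xb + t • d) - f xb‖ := rfl
      _ ≤ ↑K * (t * ‖d‖) := this
      _ = C * t := by ring
  have hBdd : Filter.IsBoundedUnder (· ≤ ·) T q :=
    isBoundedUnder_of_eventually_le (hqbound.mono fun t h => (abs_le.mp h).2)
  -- the g-quotient
  set gq : ℝ → ℝ := fun t => (max (f (xb + t • d)) 0 - max a 0) / t with hgq
  have hgqbound : ∀ᶠ t in T, -C ≤ gq t := by
    filter_upwards [hqbound, hpos] with t hqb htpos
    have htpos' : (0:ℝ) < t := htpos
    have h1 : |max (f (xb + t • d)) 0 - max a 0| ≤ |f (xb + t • d) - a| :=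
      abs_max_sub_max_le_abs _ _ _
    have h2 : |gq t| ≤ |q t| := by
      rw [hgq, hq, abs_div, abs_div, abs_of_pos htpos']
      gcongr
    have := (abs_le.mp (h2.trans hqb)).1
    linarith
  have hcob : Filter.IsCoboundedUnder (· ≤ ·) T gq :=
    isCoboundedUnder_le_of_eventually_le T hgqbound
  -- show limsup gq ≤ max (a + L) 0 - max a 0
  have key : Filter.limsup gq T ≤ max (a + L) 0 - max a 0 := by
    refine le_of_forall_pos_le_add fun ε hε => ?_
    have hlt : ∀ᶠ t in T, q t < L + ε :=
      eventually_lt_of_limsup_lt (by rw [← hL]; linarith) hBdd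
    have hle1 : ∀ᶠ t in T, t < 1 := by
      have : Set.Ioo (0:ℝ) 1 ∈ T := Ioo_mem_nhdsGT_of_mem (by norm_num)
      filter_upwards [this] with t ht using ht.2
    refine Filter.limsup_le_of_le hcob ?_
    filter_upwards [hlt, hpos, hle1] with t hqt htpos ht1
    have htpos' : (0:ℝ) < t := htpos
    have hrw : f (xb + t • d) = a + t * q t := by
      rw [hq]; field_simp; ring
    have step1 : gq t ≤ max (a + q t) 0 - max a 0 := by
      show (max (f (xb + t • d)) 0 - max a 0) / t ≤ _
      rw [hrw, div_le_iff₀ htpos']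
      have := max_convex_aux a (q t) t htpos' ht1.le
      linarith
    have step2 : max (a + q t) 0 - max a 0 ≤ max (a + (L + ε)) 0 - max a 0 := by
      have : max (a + q t) 0 ≤ max (a + (L + ε)) 0 :=
        max_le_max (by linarith) le_rfl
      linarith
    have step3 : max (a + (L + ε)) 0 - max a 0 ≤ (max (a + L) 0 - max a 0) + ε := by
      have h := abs_max_sub_max_le_abs (a + (L + ε)) (a + L) 0
      have : |a + (L + ε) - (a + L)| = ε := by
        rw [show a + (L + ε) - (a + L) = ε by ring, abs_of_pos hε]
      rw [this] at h
      have := (abs_le.mp h).2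
      linarith
    linarith
  calc upperDirDeriv (fun x => max (f x) 0) xb d = Filter.limsup gq T := rfl
    _ ≤ max (a + L) 0 - max a 0 := key
    _ = max (f xb + upperDirDeriv f xb d) 0 - max (f xb) 0 := rfl
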